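/- For every state D on the generalized type semigroup W(X,G), the function D̄ defined by D̄([a]) = sup_{ε>0} D([(a−ε)_+]) is a lower semi-continuous state on W(X,G), i.e., D̄ is order-preserving, additive, sends 0 to 0, and satisfies D̄([a]) = sup_{ε>0} D̄([(a−ε)_+]) for all a. -/

import Mathlib

open scoped Pointwise NNReal ENNReal

variable {X : Type*} [TopologicalSpace X] {G : Type*} [Group G] [MulAction G X]

/-- The open support of a continuous `ℝ≥0`-valued function. -/
def osupp (f : C(X, ℝ≥0)) : Set X := {x | f x ≠ 0}

/-- Dynamical subequivalence `A ≼ B` for two finite tuples (lists) of subsets of `X`. -/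
def SetSubeq (G : Type*) [Group G] [MulAction G X] (A B : List (Set X)) : Prop :=
  ∀ F : Fin A.length → Set X,
    (∀ i, IsClosed (F i) ∧ F i ⊆ A.get i) →
    ∃ (J : Fin A.length → ℕ)
      (U : (i : Fin A.length) → Fin (J i) → Set X)
      (s : (i : Fin A.length) → Fin (J i) → G)
      (k : (i : Fin A.length) → Fin (J i) → Fin B.length),
      (∀ i j, IsOpen (U i j)) ∧
      (∀ i, F i ⊆ ⋃ j, U i j) ∧
      (∀ i j, (s i j) • U i j ⊆ B.get (k i j)) ∧
      (∀ (p q : Σ i : Fin A.length, Fin (J i)), p ≠ q → k p.1 p.2 = k q.1 q.2 →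
        Disjoint ((s p.1 p.2) • U p.1 p.2) ((s q.1 q.2) • U q.1 q.2))

/-- Dynamical subequivalence `a ≼ b` for tuples of nonnegative continuous functions. -/
def DynSubeq (G : Type*) [Group G] [MulAction G X] (a b : List C(X, ℝ≥0)) : Prop :=
  SetSubeq G (a.map osupp) (b.map osupp)

/-- The entrywise cut-down `(f - ε)₊`. -/
noncomputable def cutFun (f : C(X, ℝ≥0)) (ε : ℝ≥0) : C(X, ℝ≥0) :=
  ⟨fun x => f x - ε, f.continuous.sub continuous_const⟩

noncomputable def cutList (a : List C(X, ℝ≥0)) (ε : ℝ≥0) : List C(X, ℝ≥0) := a.map (cutFun · ε)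

/-- Membership in the algebra of sets generated by the open sets of `X`. -/
def InAlg (X : Type*) [TopologicalSpace X] (s : Set X) : Prop :=
  s ∈ MeasureTheory.generateSetAlgebra {t : Set X | IsOpen t}

/-- A `G`-invariant regular premeasure on the algebra generated by the open sets. -/
structure InvRegPremeasure (X : Type*) [TopologicalSpace X] (G : Type*) [Group G]
    [MulAction G X] where
  m : Set X → ℝ≥0∞
  junk : ∀ s : Set X, ¬ InAlg X s → m s = 0
  empty' : m ∅ = 0
  countably_additive : ∀ A : ℕ → Set X, (∀ n, InAlg X (A n)) →
    Pairwise (Function.onFun Disjoint A) → InAlg X (⋃ n, A n) →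
    m (⋃ n, A n) = ∑' n, m (A n)
  invariant : ∀ (g : G) (s : Set X), InAlg X s → m (g • s) = m s
  inner_regular : ∀ s : Set X, InAlg X s →
    m s = ⨆ (F : Set X) (_ : IsCompact F ∧ F ⊆ s), m F
  outer_regular : ∀ s : Set X, InAlg X s →
    m s = ⨅ (O : Set X) (_ : IsOpen O ∧ s ⊆ O), m O

/-- A state on the generalized type semigroup `W(X, G)`, described at the level of
`K(X, G)`: a function on tuples which is monotone for `≼`, additive for concatenation,
and vanishes on the empty tuple. -/
structure DynState (X : Type*) [TopologicalSpace X] (G : Type*) [Group G]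
    [MulAction G X] where
  toFun : List C(X, ℝ≥0) → ℝ≥0∞
  mono : ∀ a b, DynSubeq G a b → toFun a ≤ toFun b
  additive : ∀ a b, toFun (a ++ b) = toFun a + toFun b
  zero' : toFun [] = 0

/-- Lower semicontinuity of a state. -/
def DynState.LSC (D : DynState X G) : Prop :=
  ∀ a, D.toFun a = ⨆ (ε : ℝ≥0) (_ : 0 < ε), D.toFun (cutList a ε)


section Aux

lemma isOpen_osupp (f : C(X, ℝ≥0)) : IsOpen (osupp f) :=
  isOpen_compl_singleton.preimage f.continuous

lemma osupp_cutFun (f : C(X, ℝ≥0)) (ε : ℝ≥0) : osupp (cutFun f ε) = {x | ε < f x} := by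
  ext x
  simp [osupp, cutFun, tsub_eq_zero_iff_le, not_le]

lemma get_map_osupp (l : List C(X, ℝ≥0)) (i : Fin (l.map osupp).length) :
    (l.map osupp).get i = osupp (l.get (i.cast (List.length_map osupp : (l.map osupp).length = l.length))) := by
  simp [List.get_eq_getElem, List.getElem_map]

lemma dynSubeq_of_osupp_subset {a b : List C(X, ℝ≥0)} (hlen : a.length = b.length)
    (hsub : ∀ (i : ℕ) (hia : i < a.length) (hib : i < b.length),
      osupp (a.get ⟨i, hia⟩) ⊆ osupp (b.get ⟨i, hib⟩)) :
    DynSubeq G a b := by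
  intro F hF
  have ec : (a.map osupp).length = (b.map osupp).length := by
    simpa using hlen
  refine ⟨fun _ => 1, fun i _ => (b.map osupp).get (i.cast ec), fun _ _ => 1,
    fun i _ => i.cast ec, ?_, ?_, ?_, ?_⟩
  · intro i j
    dsimp only
    rw [get_map_osupp]
    exact isOpen_osupp _
  · intro i
    dsimp only
    refine Set.Subset.trans ?_ (Set.subset_iUnion _ (0 : Fin 1))
    refine (hF i).2.trans ?_
    rw [get_map_osupp, get_map_osupp]
    have hia : i.1 < a.length := by
      have := i.2; simpa using this
    have hib : i.1 < b.length := by omega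
    exact hsub i.1 hia hib
  · intro i j
    rw [one_smul]
  · rintro ⟨i, j⟩ ⟨i', j'⟩ hpq hk
    exfalso
    apply hpq
    have h1 : i = i' := Fin.ext (by simpa using congrArg Fin.val hk)
    subst h1
    exact congrArg _ (Subsingleton.elim j j')

lemma dynSubeq_cutList_anti (a : List C(X, ℝ≥0)) {ε ε' : ℝ≥0} (h : ε ≤ ε') :
    DynSubeq G (cutList a ε') (cutList a ε) := by
  apply dynSubeq_of_osupp_subset (by simp [cutList])
  intro i hia hib
  simp only [cutList, List.get_eq_getElem, List.getElem_map, osupp_cutFun]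
  intro x hx
  exact lt_of_le_of_lt h hx

lemma cutFun_cutFun (f : C(X, ℝ≥0)) (ε δ : ℝ≥0) :
    cutFun (cutFun f ε) δ = cutFun f (ε + δ) := by
  ext x
  simp [cutFun, tsub_tsub]

lemma cutList_cutList (c : List C(X, ℝ≥0)) (ε δ : ℝ≥0) :
    cutList (cutList c ε) δ = cutList c (ε + δ) := by
  simp only [cutList, List.map_map]
  refine List.map_congr_left fun f _ => ?_
  simp [Function.comp, cutFun_cutFun]

lemma key_cut_subeq [CompactSpace X] [T2Space X]
    (hG : ∀ g : G, Continuous fun x : X => g • x)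
    {a b : List C(X, ℝ≥0)} (h : DynSubeq G a b) {ε : ℝ≥0} (hε : 0 < ε) :
    ∃ δ : ℝ≥0, 0 < δ ∧ DynSubeq G (cutList a ε) (cutList b δ) := by
  classical
  have ea : (a.map osupp).length = a.length := List.length_map osupp
  have eb : (b.map osupp).length = b.length := List.length_map osupp
  set F : Fin (a.map osupp).length → Set X :=
    fun i => (a.get (i.cast ea)) ⁻¹' Set.Ici ε with hFdef
  have hFcl : ∀ i, IsClosed (F i) ∧ F i ⊆ (a.map osupp).get i := by
    intro i
    constructor
    · exact isClosed_Ici.preimage (a.get (i.cast ea)).continuous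
    · rw [get_map_osupp]
      intro x hx
      exact (hε.trans_le hx).ne'
  obtain ⟨J, U, s, k, hUo, hFU, hsU, hdisj⟩ := h F hFcl
  have hshrink : ∀ i, ∃ V : Fin (J i) → Set X,
      F i ⊆ Set.iUnion V ∧ (∀ j, IsOpen (V j)) ∧ ∀ j, closure (V j) ⊆ U i j := by
    intro i
    exact exists_subset_iUnion_closure_subset
      (isClosed_Ici.preimage (a.get (i.cast ea)).continuous) (hUo i)
      (fun x _ => Set.toFinite _) (hFU i)
  choose V hFV hVo hVU using hshrink
  set K : (Σ i : Fin (a.map osupp).length, Fin (J i)) → Set X :=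
    fun p => s p.1 p.2 • closure (V p.1 p.2) with hKdef
  have hKcomp : ∀ p, IsCompact (K p) := by
    intro p
    rw [hKdef]
    dsimp only
    rw [← Set.image_smul]
    exact (isClosed_closure.isCompact).image (hG _)
  have hKpos : ∀ p, ∀ x ∈ K p, (b.get ((k p.1 p.2).cast eb)) x ≠ 0 := by
    intro p x hx
    have hx2 : x ∈ (b.map osupp).get (k p.1 p.2) :=
      hsU p.1 p.2 (Set.smul_set_mono (hVU p.1 p.2) hx)
    rw [get_map_osupp] at hx2
    exact hx2
  have hδp : ∀ p : Σ i : Fin (a.map osupp).length, Fin (J i),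
      ∃ δ : ℝ≥0, 0 < δ ∧ ∀ x ∈ K p, δ < (b.get ((k p.1 p.2).cast eb)) x := by
    intro p
    by_cases hne : (K p).Nonempty
    · obtain ⟨x₀, hx₀, hmin⟩ := (hKcomp p).exists_isMinOn hne
        (b.get ((k p.1 p.2).cast eb)).continuous.continuousOn
      have hv : (b.get ((k p.1 p.2).cast eb)) x₀ ≠ 0 := hKpos p x₀ hx₀
      refine ⟨(b.get ((k p.1 p.2).cast eb)) x₀ / 2, ?_, ?_⟩
      · exact half_pos (pos_iff_ne_zero.mpr hv)
      · intro x hx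
        exact lt_of_lt_of_le (NNReal.half_lt_self hv) (isMinOn_iff.mp hmin x hx)
    · exact ⟨1, one_pos, fun x hx => absurd ⟨x, hx⟩ hne⟩
  choose δp hδp0 hδpK using hδp
  have hglob : ∃ δ : ℝ≥0, 0 < δ ∧ ∀ p, ∀ x ∈ K p,
      δ < (b.get ((k p.1 p.2).cast eb)) x := by
    by_cases hne : Nonempty (Σ i : Fin (a.map osupp).length, Fin (J i))
    · haveI := hne
      refine ⟨Finset.univ.inf' Finset.univ_nonempty δp, ?_, ?_⟩
      · rw [Finset.lt_inf'_iff]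
        exact fun p _ => hδp0 p
      · intro p x hx
        exact lt_of_le_of_lt (Finset.inf'_le _ (Finset.mem_univ p)) (hδpK p x hx)
    · exact ⟨1, one_pos, fun p => absurd ⟨p⟩ hne⟩
  obtain ⟨δ, hδ0, hδK⟩ := hglob
  refine ⟨δ, hδ0, ?_⟩
  intro F' hF'
  have e2 : ((cutList a ε).map osupp).length = (a.map osupp).length := by
    simp [cutList]
  have e3 : (b.map osupp).length = ((cutList b δ).map osupp).length := by
    simp [cutList]
  refine ⟨fun i => J (i.cast e2), fun i j => V (i.cast e2) j,
    fun i j => s (i.cast e2) j, fun i j => (k (i.cast e2) j).cast e3, ?_, ?_, ?_, ?_⟩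
  · intro i j
    exact hVo _ j
  · intro i x hx
    have hx2 := (hF' i).2 hx
    have hx3 : x ∈ F (i.cast e2) := by
      rw [get_map_osupp] at hx2
      simp only [cutList, List.get_eq_getElem, List.getElem_map, Fin.coe_cast,
        osupp_cutFun, Set.mem_setOf_eq] at hx2
      simp only [hFdef, Set.mem_preimage, Set.mem_Ici, List.get_eq_getElem, Fin.coe_cast]
      exact le_of_lt hx2
    exact hFV (i.cast e2) hx3
  · intro i j x hx
    have hxK : x ∈ K ⟨i.cast e2, j⟩ := Set.smul_set_mono subset_closure hx
    have hlt := hδK ⟨i.cast e2, j⟩ x hxK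
    rw [get_map_osupp]
    simp only [cutList, List.get_eq_getElem, List.getElem_map, Fin.coe_cast,
      osupp_cutFun, Set.mem_setOf_eq]
    simp only [List.get_eq_getElem, Fin.coe_cast] at hlt
    exact hlt
  · rintro ⟨i, j⟩ ⟨i', j'⟩ hpq hk
    have hne : (⟨i.cast e2, j⟩ : Σ i : Fin (a.map osupp).length, Fin (J i)) ≠
        ⟨i'.cast e2, j'⟩ := by
      intro hEq
      apply hpq
      obtain ⟨h1, h2⟩ := Sigma.mk.inj_iff.mp hEq
      have h1' : i = i' := Fin.ext (by simpa using congrArg Fin.val h1)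
      subst h1'
      cases eq_of_heq h2
      rfl
    have hkeq : k (i.cast e2) j = k (i'.cast e2) j' :=
      Fin.ext (by simpa using congrArg Fin.val hk)
    exact (hdisj ⟨i.cast e2, j⟩ ⟨i'.cast e2, j'⟩ hne hkeq).mono
      (Set.smul_set_mono ((subset_closure).trans (hVU _ _)))
      (Set.smul_set_mono ((subset_closure).trans (hVU _ _)))

end Aux

/-- **Proposition 3.4.** For every state `D` on `W(X, G)`, the function
`D̄([a]) = sup_{ε>0} D([(a-ε)₊])` is a lower semi-continuous state on `W(X, G)`. -/
theorem lscState_of_state {X : Type*} [TopologicalSpace X] [CompactSpace X]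
    [T2Space X] [TopologicalSpace.MetrizableSpace X]
    {G : Type*} [Group G] [MulAction G X]
    (hG : ∀ g : G, Continuous fun x : X => g • x)
    (D : DynState X G) :
    ∃ E : DynState X G,
      (∀ a : List C(X, ℝ≥0),
        E.toFun a = ⨆ (ε : ℝ≥0) (_ : 0 < ε), D.toFun (cutList a ε)) ∧
      E.LSC := by
  classical
  have hanti : ∀ (c : List C(X, ℝ≥0)) (ε ε' : ℝ≥0), ε ≤ ε' →
      D.toFun (cutList c ε') ≤ D.toFun (cutList c ε) :=
    fun c ε ε' h => D.mono _ _ (dynSubeq_cutList_anti c h)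
  refine ⟨⟨fun a => ⨆ (ε : ℝ≥0) (_ : 0 < ε), D.toFun (cutList a ε), ?_, ?_, ?_⟩,
    fun a => rfl, ?_⟩
  · -- mono
    intro a b hab
    refine iSup₂_le fun ε hε => ?_
    obtain ⟨δ, hδ0, hsub⟩ := key_cut_subeq hG hab hε
    exact le_trans (D.mono _ _ hsub)
      (le_iSup₂ (f := fun ε (_ : 0 < ε) => D.toFun (cutList b ε)) δ hδ0)
  · -- additive
    intro a b
    have hcut : ∀ ε : ℝ≥0, cutList (a ++ b) ε = cutList a ε ++ cutList b ε :=
      fun ε => List.map_append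
    simp only [hcut, D.additive]
    rw [iSup_subtype', iSup_subtype', iSup_subtype']
    refine (ENNReal.iSup_add_iSup fun i j => ⟨min i j, add_le_add
      (hanti a _ _ (by exact_mod_cast min_le_left i j))
      (hanti b _ _ (by exact_mod_cast min_le_right i j))⟩).symm
  · -- zero
    refine le_antisymm (iSup₂_le fun ε hε => ?_) zero_le
    simp [cutList, D.zero']
  · -- LSC
    intro c
    show (⨆ (ε : ℝ≥0) (_ : 0 < ε), D.toFun (cutList c ε)) =
      ⨆ (ε : ℝ≥0) (_ : 0 < ε), ⨆ (δ : ℝ≥0) (_ : 0 < δ),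
        D.toFun (cutList (cutList c ε) δ)
    simp only [cutList_cutList]
    apply le_antisymm
    · refine iSup₂_le fun η hη => ?_
      have hpos : 0 < η / 2 := half_pos hη
      calc D.toFun (cutList c η) = D.toFun (cutList c (η / 2 + η / 2)) := by
            rw [add_halves]
        _ ≤ ⨆ (δ : ℝ≥0) (_ : 0 < δ), D.toFun (cutList c (η / 2 + δ)) :=
            le_iSup₂ (f := fun δ (_ : 0 < δ) => D.toFun (cutList c (η / 2 + δ)))
              (η / 2) hpos
        _ ≤ ⨆ (ε : ℝ≥0) (_ : 0 < ε), ⨆ (δ : ℝ≥0) (_ : 0 < δ),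
              D.toFun (cutList c (ε + δ)) :=
            le_iSup₂ (f := fun ε (_ : 0 < ε) => ⨆ (δ : ℝ≥0) (_ : 0 < δ),
              D.toFun (cutList c (ε + δ))) (η / 2) hpos
    · refine iSup₂_le fun ε hε => iSup₂_le fun δ hδ => ?_
      exact le_iSup₂ (f := fun η (_ : 0 < η) => D.toFun (cutList c η)) (ε + δ)
        (add_pos hε hδ)
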